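/- arXiv:2103.12860 — 2 statements merged into one kernel-verified Lean document; each statement's English description precedes it below -/
import Mathlib

section
/- Let H be a Hopf algebra with bijective antipode S and A a right H-comodule algebra. The map β(a ⊗ b) = ab₍₀₎ ⊗ b₍₁₎ from A ⊗_{A^{co H}} A to A ⊗ H is bijective (respectively injective, surjective) if and only if the map β'(a ⊗ b) = a₍₀₎b ⊗ a₍₁₎ is bijective (respectively injective, surjective). -/
open TensorProduct

set_option synthInstance.maxHeartbeats 1000000
set_option maxHeartbeats 1600000

/-- The Galois map `β : A ⊗ A → A ⊗ H`, `β(a ⊗ b) = a b₍₀₎ ⊗ b₍₁₎`. -/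
noncomputable def galoisMap (K H A : Type*) [CommRing K] [Ring H] [Algebra K H]
    [Ring A] [Algebra K A] (ρ : A →ₐ[K] A ⊗[K] H) :
    A ⊗[K] A →ₗ[K] A ⊗[K] H :=
  TensorProduct.map (LinearMap.mul' K A) LinearMap.id ∘ₗ
    (TensorProduct.assoc K A A H).symm.toLinearMap ∘ₗ ρ.toLinearMap.lTensor A

/-- The opposite Galois map `β' : A ⊗ A → A ⊗ H`, `β'(a ⊗ b) = a₍₀₎ b ⊗ a₍₁₎`. -/
noncomputable def galoisMap' (K H A : Type*) [CommRing K] [Ring H] [Algebra K H]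
    [Ring A] [Algebra K A] (ρ : A →ₐ[K] A ⊗[K] H) :
    A ⊗[K] A →ₗ[K] A ⊗[K] H :=
  TensorProduct.map (LinearMap.mul' K A) LinearMap.id ∘ₗ
    (TensorProduct.assoc K A A H).symm.toLinearMap ∘ₗ
    LinearMap.lTensor A (TensorProduct.comm K H A).toLinearMap ∘ₗ
    (TensorProduct.assoc K A H A).toLinearMap ∘ₗ ρ.toLinearMap.rTensor A

/-- The submodule of `A ⊗[K] A` by which one quotients to obtain `A ⊗_{A^{co H}} A`. -/
noncomputable def coinvRelations (K H A : Type*) [CommRing K] [Ring H] [Algebra K H]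
    [Ring A] [Algebra K A] (ρ : A →ₐ[K] A ⊗[K] H) : Submodule K (A ⊗[K] A) :=
  Submodule.span K {z : A ⊗[K] A | ∃ a b c : A,
    ρ b = b ⊗ₜ[K] (1 : H) ∧ z = (a * b) ⊗ₜ[K] c - a ⊗ₜ[K] (b * c)}

section GaloisAux

variable {K H A : Type*} [CommRing K] [Ring H] [Algebra K H] [Ring A] [Algebra K A]

/-- Auxiliary map `T f : A ⊗ H → A ⊗ H`, `T f (c ⊗ h) = f(c) * (1 ⊗ h)`. -/
noncomputable def galoisAuxT (f : A →ₗ[K] A ⊗[K] H) : A ⊗[K] H →ₗ[K] A ⊗[K] H :=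
  LinearMap.lTensor A (LinearMap.mul' K H) ∘ₗ (TensorProduct.assoc K A H H).toLinearMap ∘ₗ
    f.rTensor H

lemma galoisAuxT_tmul (f : A →ₗ[K] A ⊗[K] H) (c : A) (h : H) :
    galoisAuxT f (c ⊗ₜ[K] h) = f c * ((1 : A) ⊗ₜ[K] h) := by
  have key : ∀ y : A ⊗[K] H,
      LinearMap.lTensor A (LinearMap.mul' K H) ((TensorProduct.assoc K A H H) (y ⊗ₜ[K] h))
        = y * ((1 : A) ⊗ₜ[K] h) := by
    intro y
    induction y using TensorProduct.induction_on with
    | zero => rw [zero_tmul]; simp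
    | tmul d l => simp [Algebra.TensorProduct.tmul_mul_tmul]
    | add u v hu hv => simp [add_tmul, hu, hv, add_mul]
  simp only [galoisAuxT, LinearMap.coe_comp, Function.comp_apply, LinearMap.rTensor_tmul,
    LinearEquiv.coe_coe]
  exact key (f c)

lemma galoisAuxT_mul_right (f : A →ₗ[K] A ⊗[K] H) (x : A ⊗[K] H) (h : H) :
    galoisAuxT f (x * ((1 : A) ⊗ₜ[K] h)) = galoisAuxT f x * ((1 : A) ⊗ₜ[K] h) := by
  induction x using TensorProduct.induction_on with
  | zero => simp
  | tmul c k =>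
      simp [Algebra.TensorProduct.tmul_mul_tmul, galoisAuxT_tmul, mul_assoc]
  | add u v hu hv => simp [add_mul, hu, hv]

lemma galoisAuxT_one_mul (ρ : A →ₐ[K] A ⊗[K] H) (a : A) (x : A ⊗[K] H) :
    galoisAuxT ρ.toLinearMap ((a ⊗ₜ[K] (1 : H)) * x) = ρ a * galoisAuxT ρ.toLinearMap x := by
  induction x using TensorProduct.induction_on with
  | zero => simp
  | tmul c k =>
      simp [Algebra.TensorProduct.tmul_mul_tmul, galoisAuxT_tmul, map_mul, mul_assoc]
  | add u v hu hv => simp [mul_add, hu, hv]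

lemma galoisMap_tmul (ρ : A →ₐ[K] A ⊗[K] H) (a b : A) :
    galoisMap K H A ρ (a ⊗ₜ[K] b) = (a ⊗ₜ[K] (1 : H)) * ρ b := by
  have key : ∀ y : A ⊗[K] H,
      TensorProduct.map (LinearMap.mul' K A) LinearMap.id
          ((TensorProduct.assoc K A A H).symm (a ⊗ₜ[K] y))
        = (a ⊗ₜ[K] (1 : H)) * y := by
    intro y
    induction y using TensorProduct.induction_on with
    | zero => simp
    | tmul c h => simp [Algebra.TensorProduct.tmul_mul_tmul]
    | add u v hu hv => simp [tmul_add, hu, hv, mul_add]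
  simp only [galoisMap, LinearMap.coe_comp, Function.comp_apply, LinearMap.lTensor_tmul,
    LinearEquiv.coe_coe]
  exact key (ρ b)

lemma galoisMap'_tmul (ρ : A →ₐ[K] A ⊗[K] H) (a b : A) :
    galoisMap' K H A ρ (a ⊗ₜ[K] b) = ρ a * (b ⊗ₜ[K] (1 : H)) := by
  have key : ∀ x : A ⊗[K] H,
      TensorProduct.map (LinearMap.mul' K A) LinearMap.id
          ((TensorProduct.assoc K A A H).symm
            (LinearMap.lTensor A (TensorProduct.comm K H A).toLinearMap
              ((TensorProduct.assoc K A H A) (x ⊗ₜ[K] b))))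
        = x * (b ⊗ₜ[K] (1 : H)) := by
    intro x
    induction x using TensorProduct.induction_on with
    | zero => rw [zero_tmul]; simp
    | tmul c h => simp [Algebra.TensorProduct.tmul_mul_tmul]
    | add u v hu hv => simp [add_tmul, hu, hv, add_mul]
  simp only [galoisMap', LinearMap.coe_comp, Function.comp_apply, LinearMap.rTensor_tmul,
    LinearEquiv.coe_coe]
  exact key (ρ a)

end GaloisAux

section GaloisHopf

variable {K H A : Type*} [CommRing K] [Ring H] [HopfAlgebra K H] [Ring A] [Algebra K A]

local notation "Sa" => HopfAlgebra.antipode (R := K) (A := H)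

lemma galoisAux_phi_rho (ρ : A →ₐ[K] A ⊗[K] H)
    (hcoassoc : ∀ a : A, (TensorProduct.assoc K A H H) ((ρ.toLinearMap.rTensor H) (ρ a)) =
      ((Coalgebra.comul (R := K) (A := H)).lTensor A) (ρ a))
    (hcounit : ∀ a : A,
      (TensorProduct.rid K A) (((Coalgebra.counit (R := K) (A := H)).lTensor A) (ρ a)) = a)
    (a : A) :
    galoisAuxT ((LinearMap.lTensor A Sa) ∘ₗ ρ.toLinearMap) (ρ a) = a ⊗ₜ[K] (1 : H) := by
  have hassoc : ∀ x : (A ⊗[K] H) ⊗[K] H,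
      (TensorProduct.assoc K A H H) ((LinearMap.lTensor A Sa).rTensor H x)
        = LinearMap.lTensor A (LinearMap.rTensor H Sa) ((TensorProduct.assoc K A H H) x) := by
    intro x
    have : ((TensorProduct.assoc K A H H).toLinearMap ∘ₗ (LinearMap.lTensor A Sa).rTensor H)
        = (LinearMap.lTensor A (LinearMap.rTensor H Sa)) ∘ₗ
          (TensorProduct.assoc K A H H).toLinearMap :=
      TensorProduct.ext_threefold (fun x y z => by simp)
    exact LinearMap.congr_fun this x
  have h3 : ((Coalgebra.counit (R := K) (A := H)).lTensor A) (ρ a) = a ⊗ₜ[K] (1 : K) := by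
    have h := congrArg (TensorProduct.rid K A).symm (hcounit a)
    rw [LinearEquiv.symm_apply_apply] at h
    rw [h, TensorProduct.rid_symm_apply]
  simp only [galoisAuxT, LinearMap.coe_comp, Function.comp_apply, LinearEquiv.coe_coe]
  rw [LinearMap.rTensor_comp, LinearMap.comp_apply, hassoc, hcoassoc]
  rw [← LinearMap.comp_apply, ← LinearMap.lTensor_comp, ← LinearMap.comp_apply,
    ← LinearMap.lTensor_comp, LinearMap.comp_assoc,
    HopfAlgebra.mul_antipode_rTensor_comul, LinearMap.lTensor_comp, LinearMap.comp_apply, h3]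
  simp

lemma galoisAux_lam_rhoS (ρ : A →ₐ[K] A ⊗[K] H)
    (hcoassoc : ∀ a : A, (TensorProduct.assoc K A H H) ((ρ.toLinearMap.rTensor H) (ρ a)) =
      ((Coalgebra.comul (R := K) (A := H)).lTensor A) (ρ a))
    (hcounit : ∀ a : A,
      (TensorProduct.rid K A) (((Coalgebra.counit (R := K) (A := H)).lTensor A) (ρ a)) = a)
    (a : A) :
    galoisAuxT ρ.toLinearMap ((LinearMap.lTensor A Sa) (ρ a)) = a ⊗ₜ[K] (1 : H) := by
  have hcomm : ρ.toLinearMap.rTensor H ((LinearMap.lTensor A Sa) (ρ a))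
      = (LinearMap.lTensor (A ⊗[K] H) Sa) (ρ.toLinearMap.rTensor H (ρ a)) := by
    rw [← LinearMap.comp_apply, LinearMap.rTensor_comp_lTensor, ← LinearMap.lTensor_comp_rTensor,
      LinearMap.comp_apply]
  have hassoc : ∀ x : (A ⊗[K] H) ⊗[K] H,
      (TensorProduct.assoc K A H H) ((LinearMap.lTensor (A ⊗[K] H) Sa) x)
        = LinearMap.lTensor A (LinearMap.lTensor H Sa) ((TensorProduct.assoc K A H H) x) := by
    intro x
    have : ((TensorProduct.assoc K A H H).toLinearMap ∘ₗ (LinearMap.lTensor (A ⊗[K] H) Sa))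
        = (LinearMap.lTensor A (LinearMap.lTensor H Sa)) ∘ₗ
          (TensorProduct.assoc K A H H).toLinearMap :=
      TensorProduct.ext_threefold (fun x y z => by simp)
    exact LinearMap.congr_fun this x
  have h3 : ((Coalgebra.counit (R := K) (A := H)).lTensor A) (ρ a) = a ⊗ₜ[K] (1 : K) := by
    have h := congrArg (TensorProduct.rid K A).symm (hcounit a)
    rw [LinearEquiv.symm_apply_apply] at h
    rw [h, TensorProduct.rid_symm_apply]
  simp only [galoisAuxT, LinearMap.coe_comp, Function.comp_apply, LinearEquiv.coe_coe]
  rw [hcomm, hassoc, hcoassoc]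
  rw [← LinearMap.comp_apply, ← LinearMap.lTensor_comp, ← LinearMap.comp_apply,
    ← LinearMap.lTensor_comp, LinearMap.comp_assoc,
    HopfAlgebra.mul_antipode_lTensor_comul, LinearMap.lTensor_comp, LinearMap.comp_apply, h3]
  simp

lemma galoisAux_lTensorS_one_mul (a : A) (y : A ⊗[K] H) :
    LinearMap.lTensor A Sa ((a ⊗ₜ[K] (1 : H)) * y)
      = (a ⊗ₜ[K] (1 : H)) * LinearMap.lTensor A Sa y := by
  induction y using TensorProduct.induction_on with
  | zero => simp
  | tmul c h => simp [Algebra.TensorProduct.tmul_mul_tmul]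
  | add u v hu hv => simp [mul_add, hu, hv]

lemma galoisMap'_eq (ρ : A →ₐ[K] A ⊗[K] H)
    (hcoassoc : ∀ a : A, (TensorProduct.assoc K A H H) ((ρ.toLinearMap.rTensor H) (ρ a)) =
      ((Coalgebra.comul (R := K) (A := H)).lTensor A) (ρ a))
    (hcounit : ∀ a : A,
      (TensorProduct.rid K A) (((Coalgebra.counit (R := K) (A := H)).lTensor A) (ρ a)) = a) :
    galoisMap' K H A ρ
      = galoisAuxT ρ.toLinearMap ∘ₗ LinearMap.lTensor A Sa ∘ₗ galoisMap K H A ρ := by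
  apply TensorProduct.ext'
  intro a b
  simp only [LinearMap.coe_comp, Function.comp_apply]
  rw [galoisMap_tmul, galoisMap'_tmul, galoisAux_lTensorS_one_mul, galoisAuxT_one_mul,
    galoisAux_lam_rhoS ρ hcoassoc hcounit]

end GaloisHopf

/-- Let `H` be a Hopf algebra with bijective antipode and `A` a right `H`-comodule algebra.
The Galois map `β(a ⊗ b) = a b₍₀₎ ⊗ b₍₁₎` on `A ⊗_{A^{co H}} A` (realized as the quotient of
`A ⊗[K] A` by the relations `ab ⊗ c = a ⊗ bc` for `b` coinvariant) is bijective
(respectively injective, surjective) if and only if the map `β'(a ⊗ b) = a₍₀₎ b ⊗ a₍₁₎` is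
bijective (respectively injective, surjective). -/
theorem galoisMap_bijective_iff (K H A : Type*) [CommRing K] [Ring H] [HopfAlgebra K H]
    [Ring A] [Algebra K A]
    (hS : Function.Bijective (HopfAlgebra.antipode (R := K) (A := H)))
    (ρ : A →ₐ[K] A ⊗[K] H)
    (hcoassoc : ∀ a : A, (TensorProduct.assoc K A H H) ((ρ.toLinearMap.rTensor H) (ρ a)) =
      ((Coalgebra.comul (R := K) (A := H)).lTensor A) (ρ a))
    (hcounit : ∀ a : A,
      (TensorProduct.rid K A) (((Coalgebra.counit (R := K) (A := H)).lTensor A) (ρ a)) = a) :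
    ((LinearMap.ker (galoisMap K H A ρ) = coinvRelations K H A ρ ∧
        LinearMap.range (galoisMap K H A ρ) = ⊤) ↔
      (LinearMap.ker (galoisMap' K H A ρ) = coinvRelations K H A ρ ∧
        LinearMap.range (galoisMap' K H A ρ) = ⊤)) ∧
    (LinearMap.ker (galoisMap K H A ρ) = coinvRelations K H A ρ ↔
      LinearMap.ker (galoisMap' K H A ρ) = coinvRelations K H A ρ) ∧
    (LinearMap.range (galoisMap K H A ρ) = ⊤ ↔
      LinearMap.range (galoisMap' K H A ρ) = ⊤) := by
  set S := HopfAlgebra.antipode (R := K) (A := H) with hSdef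
  set rS : A →ₗ[K] A ⊗[K] H := (LinearMap.lTensor A S) ∘ₗ ρ.toLinearMap with hrS
  -- the two auxiliary maps are mutually inverse
  have hlam_phi : ∀ x : A ⊗[K] H,
      galoisAuxT ρ.toLinearMap (galoisAuxT rS x) = x := by
    intro x
    induction x using TensorProduct.induction_on with
    | zero => simp
    | tmul c h =>
        rw [galoisAuxT_tmul, galoisAuxT_mul_right]
        have : galoisAuxT ρ.toLinearMap (rS c) = c ⊗ₜ[K] (1 : H) := by
          have := galoisAux_lam_rhoS ρ hcoassoc hcounit c
          simpa [hrS, LinearMap.comp_apply] using this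
        rw [this, Algebra.TensorProduct.tmul_mul_tmul, mul_one, one_mul]
    | add u v hu hv => simp [hu, hv]
  have hphi_lam : ∀ x : A ⊗[K] H,
      galoisAuxT rS (galoisAuxT ρ.toLinearMap x) = x := by
    intro x
    induction x using TensorProduct.induction_on with
    | zero => simp
    | tmul c h =>
        rw [galoisAuxT_tmul, galoisAuxT_mul_right]
        have : galoisAuxT rS (ρ.toLinearMap c) = c ⊗ₜ[K] (1 : H) := by
          simpa [hrS] using galoisAux_phi_rho ρ hcoassoc hcounit c
        rw [this, Algebra.TensorProduct.tmul_mul_tmul, mul_one, one_mul]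
    | add u v hu hv => simp [hu, hv]
  have hlam_bij : Function.Bijective (galoisAuxT ρ.toLinearMap (K := K) (H := H) (A := A)) :=
    Function.bijective_iff_has_inverse.mpr ⟨galoisAuxT rS, hphi_lam, hlam_phi⟩
  have hlT_bij : Function.Bijective (LinearMap.lTensor A S) := by
    have h1 := (LinearEquiv.lTensor A (LinearEquiv.ofBijective S hS)).bijective
    have h2 : ⇑(LinearEquiv.lTensor A (LinearEquiv.ofBijective S hS))
        = ⇑(LinearMap.lTensor A S) := by
      have := LinearEquiv.coe_lTensor (M := A) (f := LinearEquiv.ofBijective S hS) (R := K)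
      exact congrArg (fun f : A ⊗[K] H →ₗ[K] A ⊗[K] H => ⇑f) this
    rwa [h2] at h1
  have hmain := galoisMap'_eq ρ hcoassoc hcounit
  -- kernels agree
  have hker : LinearMap.ker (galoisMap' K H A ρ) = LinearMap.ker (galoisMap K H A ρ) := by
    rw [hmain]
    ext x
    simp only [LinearMap.mem_ker, LinearMap.coe_comp, Function.comp_apply]
    constructor
    · intro h
      have h1 : LinearMap.lTensor A S (galoisMap K H A ρ x) = 0 := by
        apply hlam_bij.injective
        simpa using h
      apply hlT_bij.injective
      simpa using h1
    · intro h
      rw [h]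
      simp
  have hrange : LinearMap.range (galoisMap' K H A ρ) = ⊤ ↔
      LinearMap.range (galoisMap K H A ρ) = ⊤ := by
    rw [LinearMap.range_eq_top, LinearMap.range_eq_top, hmain]
    constructor
    · intro h y
      obtain ⟨x, hx⟩ := h (galoisAuxT ρ.toLinearMap (LinearMap.lTensor A S y))
      simp only [LinearMap.coe_comp, Function.comp_apply] at hx
      refine ⟨x, hlT_bij.injective (hlam_bij.injective hx)⟩
    · intro h y
      obtain ⟨z, hz⟩ := (hlam_bij.comp hlT_bij).surjective y
      obtain ⟨x, hx⟩ := h z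
      refine ⟨x, ?_⟩
      simp only [LinearMap.coe_comp, Function.comp_apply, hx]
      exact hz
  have h2 : (LinearMap.ker (galoisMap K H A ρ) = coinvRelations K H A ρ ↔
      LinearMap.ker (galoisMap' K H A ρ) = coinvRelations K H A ρ) := by rw [hker]
  have h3 : (LinearMap.range (galoisMap K H A ρ) = ⊤ ↔
      LinearMap.range (galoisMap' K H A ρ) = ⊤) := hrange.symm
  exact ⟨and_congr h2 h3, h2, h3⟩
end

section
/- Let R and B be K-algebras and A = R[x; σ, δ] a skew polynomial ring where σ, δ are K-linear. Then A ⊗_K B is isomorphic as a K-algebra to the skew polynomial ring (R ⊗_K B)[z; σ ⊗ id_B, δ ⊗ id_B]. -/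
open TensorProduct

/-- `A` is a skew polynomial ring (Ore extension) `R[x; σ, δ]`: `A` contains `R` (via the
injective ring homomorphism `i`), `δ` is a `σ`-derivation, `A` is a free left `R`-module
with basis `{1, x, x², …}`, and `x r = σ(r) x + δ(r)` for all `r ∈ R`. -/
structure IsSkewPolynomialRing (R A : Type*) [Ring R] [Ring A]
    (σ : R →+* R) (δ : R → R) (i : R →+* A) (x : A) : Prop where
  inj : Function.Injective i
  deriv_add : ∀ r s : R, δ (r + s) = δ r + δ s
  deriv_mul : ∀ r s : R, δ (r * s) = σ r * δ s + δ r * s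
  basis : Function.Bijective fun f : ℕ →₀ R => f.sum fun n r => i r * x ^ n
  comm : ∀ r : R, x * i r = i (σ r) * x + i (δ r)

/-- Let `R` and `B` be `K`-algebras and `A = R[x; σ, δ]` a skew polynomial ring over `R`
with `σ` a `K`-algebra endomorphism and `δ` a `K`-linear `σ`-derivation.  Then
`A ⊗[K] B` is (isomorphic as a `K`-algebra to) the skew polynomial ring
`(R ⊗[K] B)[z; σ ⊗ id_B, δ ⊗ id_B]`, via `i ⊗ id_B` and `z = x ⊗ 1`. -/
theorem skewPolynomialRing_tensor (K R B A : Type*) [CommRing K] [Ring R] [Algebra K R]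
    [Ring B] [Algebra K B] [Ring A] [Algebra K A]
    (σ : R →ₐ[K] R) (δ : R →ₗ[K] R) (i : R →ₐ[K] A) (x : A)
    (h : IsSkewPolynomialRing R A σ.toRingHom (⇑δ) i.toRingHom x) :
    IsSkewPolynomialRing (R ⊗[K] B) (A ⊗[K] B)
      (Algebra.TensorProduct.map σ (AlgHom.id K B)).toRingHom
      (⇑(δ.rTensor B))
      (Algebra.TensorProduct.map i (AlgHom.id K B)).toRingHom
      (x ⊗ₜ[K] (1 : B)) := by
  set I : R ⊗[K] B →ₐ[K] A ⊗[K] B := Algebra.TensorProduct.map i (AlgHom.id K B) with hI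
  set X : A ⊗[K] B := x ⊗ₜ[K] (1 : B) with hX
  -- The linear map version of the basis map for `A`.
  set L : (ℕ →₀ R) →ₗ[K] A :=
    Finsupp.lsum K fun n => (LinearMap.mulRight K (x ^ n)).comp i.toLinearMap with hLdef
  have hL : ⇑L = fun f : ℕ →₀ R => f.sum fun n r => i r * x ^ n := by
    funext f
    simp [hLdef, Finsupp.lsum_apply, Finsupp.sum]
  have hLb : Function.Bijective L := by rw [hL]; exact h.basis
  set e : (ℕ →₀ R) ≃ₗ[K] A := LinearEquiv.ofBijective L hLb with hedef
  -- The linear map version of the basis map for `A ⊗ B`.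
  set FL : (ℕ →₀ (R ⊗[K] B)) →ₗ[K] A ⊗[K] B :=
    Finsupp.lsum K fun n => (LinearMap.mulRight K (X ^ n)).comp I.toLinearMap with hFLdef
  have hFL : ⇑FL = fun f : ℕ →₀ (R ⊗[K] B) => f.sum fun n t => I t * X ^ n := by
    funext f
    simp [hFLdef, Finsupp.lsum_apply, Finsupp.sum]
  set E : (ℕ →₀ (R ⊗[K] B)) ≃ₗ[K] A ⊗[K] B :=
    (TensorProduct.finsuppLeft K K R B ℕ).symm.trans
      (LinearEquiv.rTensor (M := B) e) with hEdef
  have key : FL = E.toLinearMap := by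
    refine Finsupp.lhom_ext fun n t => ?_
    induction t with
    | zero => simp
    | tmul r b =>
        have h1 : E (Finsupp.single n (r ⊗ₜ[K] b)) = (e (Finsupp.single n r)) ⊗ₜ[K] b := by
          simp [hEdef, TensorProduct.finsuppLeft_symm_apply_single]
        have h2 : e (Finsupp.single n r) = i r * x ^ n := by
          rw [hedef]
          show L (Finsupp.single n r) = _
          rw [hL]
          simp [Finsupp.sum_single_index]
        simp only [LinearEquiv.coe_coe]
        rw [h1, h2, hFLdef, Finsupp.lsum_single]
        simp [hI, hX, Algebra.TensorProduct.tmul_pow, Algebra.TensorProduct.tmul_mul_tmul]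
    | add t₁ t₂ h₁ h₂ => rw [Finsupp.single_add, map_add, map_add, h₁, h₂]
  have hbasis : Function.Bijective
      (fun f : ℕ →₀ (R ⊗[K] B) => f.sum fun n t => I t * X ^ n) := by
    rw [← hFL, key]
    exact E.bijective
  refine ⟨?_, ?_, ?_, ?_, ?_⟩
  · -- injectivity
    have hFLb : Function.Bijective FL := by rw [key]; exact E.bijective
    have hs : ∀ t : R ⊗[K] B, FL (Finsupp.single 0 t) = I t := by
      intro t
      rw [hFLdef, Finsupp.lsum_single]
      simp
    intro t₁ t₂ ht
    refine Finsupp.single_injective 0 (hFLb.injective ?_)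
    rw [hs, hs]
    exact ht
  · intro r s; exact map_add _ r s
  · -- deriv_mul
    intro t s
    induction t with
    | zero => simp
    | tmul r b =>
      induction s with
      | zero => simp
      | tmul r' b' =>
          simp only [Algebra.TensorProduct.tmul_mul_tmul, LinearMap.rTensor_tmul,
            AlgHom.toRingHom_eq_coe, RingHom.coe_coe, Algebra.TensorProduct.map_tmul,
            AlgHom.coe_id, id_eq]
          rw [show (δ (r * r') : R) = σ r * δ r' + δ r * r' from h.deriv_mul r r']
          rw [add_tmul]
      | add s₁ s₂ hs₁ hs₂ =>
          rw [mul_add, map_add, hs₁, hs₂, map_add, mul_add, mul_add]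
          abel
    | add t₁ t₂ ht₁ ht₂ =>
        rw [add_mul, map_add, ht₁, ht₂, map_add, map_add, add_mul, add_mul]
        abel
  · exact hbasis
  · -- comm
    intro t
    induction t with
    | zero => simp
    | tmul r b =>
        simp only [hI, AlgHom.toRingHom_eq_coe, RingHom.coe_coe, Algebra.TensorProduct.map_tmul,
          AlgHom.coe_id, id_eq, LinearMap.rTensor_tmul, hX,
          Algebra.TensorProduct.tmul_mul_tmul, one_mul, mul_one]
        rw [show x * i r = i (σ r) * x + i (δ r) from h.comm r, add_tmul]
    | add t₁ t₂ ht₁ ht₂ =>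
        simp only [map_add, mul_add, add_mul] at ht₁ ht₂ ⊢
        rw [ht₁, ht₂]
        abel
end
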